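/- arXiv:1904.00072 — 2 statements merged into one kernel-verified Lean document; each statement's English description precedes it below -/
import Mathlib

section
/- Let n ≥ 2 and d ≥ 1 be integers and let (z_0, z_1, …, z_d, z_{11}, …, z_{dd}) ∈ ℝ^{2d+1}. If z_0 > 0 and Σ_{α=1}^d max{z_0 z_{αα}/n, z_α²/n} ≤ z_0² ((n−1)/n)² + Σ_{α=1}^d (n−1) z_0 z_{αα}/n², then there exists a finite Borel measure μ on K_n^d, invariant under permutations of the n ball factors, such that μ(K_n^d) = z_0, ∫ s_α dμ = z_α for all 1 ≤ α ≤ d, and ∫ s_{αα} dμ = z_{αα} for all 1 ≤ α ≤ d. -/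
open scoped BigOperators
open MeasureTheory

/-- `sLin n d α x = ∑ i, ξ_{i,α}` -/
noncomputable def sLin (n d : ℕ) (α : Fin d) (x : Fin n → Fin d → ℝ) : ℝ :=
  ∑ i, x i α

/-- `sQuad n d α x = ∑_{i ≠ j} ξ_{i,α} ξ_{j,α}` (sum over ordered pairs). -/
noncomputable def sQuad (n d : ℕ) (α : Fin d) (x : Fin n → Fin d → ℝ) : ℝ :=
  ∑ i, ∑ j, if i = j then 0 else x i α * x j α

noncomputable def thrVec (n A B : ℕ) : Fin n → ℝ := fun i =>
  if (i:ℕ) < A then 1 else if (i:ℕ) < B then -1 else 0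

lemma sum_indicator_lt (n A : ℕ) (hA : A ≤ n) (c : ℝ) :
    (∑ i : Fin n, if (i:ℕ) < A then c else 0) = A * c := by
  rw [Fin.sum_univ_eq_sum_range (fun i => if i < A then c else 0)]
  rw [← Finset.sum_subset (Finset.range_subset_range.2 hA)
      (fun x hx hxA => by simp only [Finset.mem_range] at hx hxA; rw [if_neg (by omega)])]
  rw [Finset.sum_congr rfl (fun x hx => if_pos (Finset.mem_range.1 hx))]
  simp [mul_comm]

lemma thrVec_sq (n A B : ℕ) (hAB : A ≤ B) (i : Fin n) :
    (thrVec n A B i)^2 = if (i:ℕ) < B then 1 else 0 := by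
  unfold thrVec
  by_cases h : (i:ℕ) < A
  · rw [if_pos h, if_pos (lt_of_lt_of_le h hAB)]; norm_num
  · rw [if_neg h]; by_cases h' : (i:ℕ) < B <;> simp [h']

lemma thrVec_sum (n A B : ℕ) (hAB : A ≤ B) (hB : B ≤ n) :
    (∑ i, thrVec n A B i) = 2 * A - B := by
  have h : ∀ i : Fin n, thrVec n A B i
      = (if (i:ℕ) < A then (2:ℝ) else 0) + (if (i:ℕ) < B then (-1:ℝ) else 0) := by
    intro i
    unfold thrVec
    by_cases h : (i:ℕ) < A
    · rw [if_pos h, if_pos h, if_pos (lt_of_lt_of_le h hAB)]; norm_num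
    · rw [if_neg h, if_neg h]; by_cases h' : (i:ℕ) < B <;> simp [h']
  rw [Finset.sum_congr rfl (fun i _ => h i), Finset.sum_add_distrib,
    sum_indicator_lt n A (le_trans hAB hB), sum_indicator_lt n B hB]
  ring

lemma thrVec_sumsq (n A B : ℕ) (hAB : A ≤ B) (hB : B ≤ n) :
    (∑ i, (thrVec n A B i)^2) = B := by
  rw [Finset.sum_congr rfl (fun i _ => thrVec_sq n A B hAB i),
    sum_indicator_lt n B hB]
  ring

lemma const_sum (n : ℕ) (v : ℝ) : (∑ _i : Fin n, v) = n * v := by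
  simp [Finset.sum_const, nsmul_eq_mul]

lemma const_sumsq (n : ℕ) (v : ℝ) : (∑ _i : Fin n, v^2) = n * v^2 := by
  simp [Finset.sum_const, nsmul_eq_mul]

lemma forall_fin3 {P : Fin 3 → Prop} (h0 : P 0) (h1 : P 1) (h2 : P 2) : ∀ k, P k := by
  intro k; fin_cases k <;> assumption

set_option maxHeartbeats 2000000 in
lemma col0 (n : ℕ) (hn : 2 ≤ n) (s q : ℝ) (hs0 : 0 ≤ s) (hs : s ≤ (n:ℝ) - 1)
    (h2 : s^2 - n + 1 ≤ q) (h3 : q ≤ ((n:ℝ)-1)^2) :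
    ∃ (w : Fin 3 → ℝ) (V : Fin 3 → Fin n → ℝ),
      (∀ k, 0 ≤ w k) ∧ (∑ k, w k) = 1 ∧ (∀ k i, (V k i)^2 ≤ 1) ∧
      ((∑ k, w k * (∑ i, V k i)) = s) ∧
      ((∑ k, w k * ((∑ i, V k i)^2 - ∑ i, (V k i)^2)) = q) := by
  have hN2 : (2:ℝ) ≤ (n:ℝ) := by exact_mod_cast hn
  obtain ⟨N, hNdef⟩ : ∃ t : ℝ, t = (n:ℝ) := ⟨_, rfl⟩
  rw [← hNdef] at hs h2 h3 hN2
  have hN0 : 0 < N := by linarith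
  have hN1 : 0 < N - 1 := by linarith
  by_cases hcase : s^2 * (N - 1) / N ≤ q
  · -- upper case: two constant atoms
    have hc' : s^2*(N-1) ≤ q*N := by
      rw [div_le_iff₀ hN0] at hcase; linarith
    obtain ⟨x, hxdef⟩ : ∃ x : ℝ, x = s / N := ⟨_, rfl⟩
    obtain ⟨y, hydef⟩ : ∃ y : ℝ, y = q / (N * (N-1)) := ⟨_, rfl⟩
    have hx0 : 0 ≤ x := hxdef ▸ div_nonneg hs0 hN0.le
    have hx1 : x ≤ (N-1)/N := by
      rw [hxdef, div_le_div_iff₀ hN0 hN0]; nlinarith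
    have hxlt : x < 1 := lt_of_le_of_lt hx1 (by rw [div_lt_one hN0]; linarith)
    have h1x : 0 < 1 - x := by linarith
    have hyx : x^2 ≤ y := by
      rw [hxdef, hydef, div_pow, div_le_div_iff₀ (by positivity) (by positivity)]
      nlinarith [mul_le_mul_of_nonneg_right hc' hN0.le]
    have hy1 : y ≤ (N-1)/N := by
      rw [hydef, div_le_div_iff₀ (by positivity) hN0]
      nlinarith
    have hylt : y < 1 := lt_of_le_of_lt hy1 (by rw [div_lt_one hN0]; linarith)
    obtain ⟨v, hvdef⟩ : ∃ v : ℝ, v = (x - y) / (1 - x) := ⟨_, rfl⟩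
    have hv : v * (1 - x) = x - y := by
      rw [hvdef]; field_simp
    have h1v : 0 < 1 - v := by
      have hh : 1 - v = (1 - 2*x + y) / (1 - x) := by
        rw [hvdef]; field_simp; ring
      rw [hh]
      apply div_pos _ h1x
      nlinarith
    have hvm1 : -1 ≤ v := by
      have hh : v + 1 = (1 - y) / (1 - x) := by rw [hvdef]; field_simp; try ring
      nlinarith [div_nonneg (by linarith : (0:ℝ) ≤ 1 - y) h1x.le]
    have hv1 : v ≤ 1 := by linarith
    obtain ⟨lam, hlamdef⟩ : ∃ l : ℝ, l = (x - v) / (1 - v) := ⟨_, rfl⟩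
    have hl : lam * (1 - v) = x - v := by rw [hlamdef]; field_simp
    have hxv : 0 ≤ x - v := by
      have hh : x - v = (y - x^2) / (1 - x) := by rw [hvdef]; field_simp; try ring
      rw [hh]; exact div_nonneg (by linarith) h1x.le
    have hlam0 : 0 ≤ lam := hlamdef ▸ div_nonneg hxv h1v.le
    have hlam1 : lam ≤ 1 := by
      rw [hlamdef, div_le_one h1v]; linarith
    have e1 : (1 - lam)*v + lam = x := by linear_combination hl
    have e2 : (1 - lam)*v^2 + lam = y := by linear_combination (1 + v) * hl - hv
    have hNx : N * x = s := by rw [hxdef]; field_simp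
    have hNy : N * (N-1) * y = q := by rw [hydef]; field_simp; try ring
    refine ⟨![1 - lam, lam, 0], ![fun _ => v, fun _ => 1, fun _ => 0], ?_, ?_, ?_, ?_, ?_⟩
    · apply forall_fin3 <;>
        simp only [Matrix.cons_val_zero, Matrix.cons_val_one, Matrix.head_cons,
          Matrix.cons_val_two, Matrix.tail_cons] <;> linarith
    · rw [Fin.sum_univ_three]
      simp only [Matrix.cons_val_zero, Matrix.cons_val_one, Matrix.head_cons,
        Matrix.cons_val_two, Matrix.tail_cons]
      ring
    · apply forall_fin3 <;>
        simp only [Matrix.cons_val_zero, Matrix.cons_val_one, Matrix.head_cons,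
          Matrix.cons_val_two, Matrix.tail_cons] <;> intro i
      · nlinarith [hvm1, hv1]
      · norm_num
      · norm_num
    · rw [Fin.sum_univ_three]
      simp only [Matrix.cons_val_zero, Matrix.cons_val_one, Matrix.head_cons,
        Matrix.cons_val_two, Matrix.tail_cons, const_sum, ← hNdef]
      linear_combination N * e1 + hNx
    · rw [Fin.sum_univ_three]
      simp only [Matrix.cons_val_zero, Matrix.cons_val_one, Matrix.head_cons,
        Matrix.cons_val_two, Matrix.tail_cons, const_sum, const_sumsq, ← hNdef]
      linear_combination N*(N-1)*e2 + hNy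
  · -- lower case
    push_neg at hcase
    obtain ⟨j0, hj0def⟩ : ∃ j : ℕ, j = ⌊s⌋₊ := ⟨_, rfl⟩
    have hj0le : (j0:ℝ) ≤ s := hj0def ▸ Nat.floor_le hs0
    have hj0lt : s < j0 + 1 := by rw [hj0def]; push_cast; exact Nat.lt_floor_add_one s
    obtain ⟨h, hhdef⟩ : ∃ h : ℝ, h = s - j0 := ⟨_, rfl⟩
    have hh0 : 0 ≤ h := by rw [hhdef]; linarith
    have hh1 : h ≤ 1 := by rw [hhdef]; linarith
    have hj1n : j0 + 1 ≤ n := by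
      have h1 : (j0:ℝ) ≤ N - 1 := le_trans hj0le hs
      have h2' : (j0:ℝ) < N := by linarith
      rw [hNdef] at h2'
      have : j0 < n := by exact_mod_cast h2'
      omega
    obtain ⟨k0, hk0def⟩ : ∃ k : ℕ, k = (n - j0)/2 := ⟨_, rfl⟩
    obtain ⟨k1, hk1def⟩ : ∃ k : ℕ, k = (n - (j0+1))/2 := ⟨_, rfl⟩
    obtain ⟨e0, he0def⟩ : ∃ e : ℕ, e = (n - j0) % 2 := ⟨_, rfl⟩
    obtain ⟨e1, he1def⟩ : ∃ e : ℕ, e = (n - (j0+1)) % 2 := ⟨_, rfl⟩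
    have hB0 : j0 + 2*k0 = n - e0 := by omega
    have hB1 : (j0+1) + 2*k1 = n - e1 := by omega
    have hee : e0 + e1 = 1 := by omega
    have hB0n : j0 + 2*k0 ≤ n := by omega
    have hB1n : (j0+1) + 2*k1 ≤ n := by omega
    have hA0B0 : j0 + k0 ≤ j0 + 2*k0 := by omega
    have hA1B1 : (j0+1) + k1 ≤ (j0+1) + 2*k1 := by omega
    have hB0r : ((j0 + 2*k0 : ℕ) : ℝ) = N - e0 := by
      rw [hB0, Nat.cast_sub (by omega : e0 ≤ n), ← hNdef]
    have hB1r : (((j0+1) + 2*k1 : ℕ) : ℝ) = N - e1 := by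
      rw [hB1, Nat.cast_sub (by omega : e1 ≤ n), ← hNdef]
    have hsumG0 : (∑ i, thrVec n (j0 + k0) (j0 + 2*k0) i) = j0 := by
      rw [thrVec_sum n _ _ hA0B0 hB0n]; push_cast; ring
    have hsumG1 : (∑ i, thrVec n ((j0+1) + k1) ((j0+1) + 2*k1) i) = (j0:ℝ) + 1 := by
      rw [thrVec_sum n _ _ hA1B1 hB1n]; push_cast; ring
    have hsqG0 : (∑ i, (thrVec n (j0 + k0) (j0 + 2*k0) i)^2) = N - e0 := by
      rw [thrVec_sumsq n _ _ hA0B0 hB0n, hB0r]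
    have hsqG1 : (∑ i, (thrVec n ((j0+1) + k1) ((j0+1) + 2*k1) i)^2) = N - e1 := by
      rw [thrVec_sumsq n _ _ hA1B1 hB1n, hB1r]
    obtain ⟨QA, hQAdef⟩ : ∃ t : ℝ, t = (1-h)*((j0:ℝ)^2 - (N - e0)) + h*(((j0:ℝ)+1)^2 - (N - e1)) := ⟨_, rfl⟩
    obtain ⟨QB, hQBdef⟩ : ∃ t : ℝ, t = s^2*(N-1)/N := ⟨_, rfl⟩
    have hseq : s = (j0:ℝ) + h := by rw [hhdef]; ring
    have heer : (e0:ℝ) + e1 = 1 := by exact_mod_cast hee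
    have key1 : QA ≤ s^2 - N + 1 := by
      rw [hQAdef, hseq]
      rcases Nat.mod_two_eq_zero_or_one (n - j0) with h0 | h0
      · have he0 : (e0:ℝ) = 0 := by rw [he0def]; exact_mod_cast h0
        rw [he0] at heer ⊢
        nlinarith [sq_nonneg (1-h)]
      · have he0 : (e0:ℝ) = 1 := by rw [he0def]; exact_mod_cast h0
        rw [he0] at heer ⊢
        nlinarith [sq_nonneg h]
    have hQBgt : s^2 - N + 1 + (N-1)/N ≤ QB := by
      have hid : QB - (s^2 - N + 1 + (N-1)/N) = ((N-1)^2 - s^2)/N := by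
        rw [hQBdef]; field_simp; ring
      have hnum : 0 ≤ ((N-1)^2 - s^2)/N := by
        apply div_nonneg _ hN0.le
        nlinarith
      linarith
    have key2 : 0 < QB - QA := by
      have h2' : (0:ℝ) < (N-1)/N := by positivity
      linarith
    obtain ⟨θ, hθdef⟩ : ∃ t : ℝ, t = (QB - q)/(QB - QA) := ⟨_, rfl⟩
    have hθ0 : 0 ≤ θ := hθdef ▸ div_nonneg (by linarith) key2.le
    have hθ1 : θ ≤ 1 := by
      rw [hθdef, div_le_one key2]; linarith
    have hθeq : θ * (QB - QA) = QB - q := by rw [hθdef]; field_simp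
    have hsN : N * (s/N) = s := by field_simp
    have hQBalt : (N*(s/N))^2 - N*(s/N)^2 = QB := by
      rw [hQBdef]; field_simp
    refine ⟨![θ*(1-h), θ*h, 1-θ],
      ![thrVec n (j0 + k0) (j0 + 2*k0), thrVec n ((j0+1) + k1) ((j0+1) + 2*k1),
        fun _ => s/N], ?_, ?_, ?_, ?_, ?_⟩
    · apply forall_fin3 <;>
        simp only [Matrix.cons_val_zero, Matrix.cons_val_one, Matrix.head_cons,
          Matrix.cons_val_two, Matrix.tail_cons]
      · nlinarith
      · nlinarith
      · linarith
    · rw [Fin.sum_univ_three]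
      simp only [Matrix.cons_val_zero, Matrix.cons_val_one, Matrix.head_cons,
        Matrix.cons_val_two, Matrix.tail_cons]
      ring
    · apply forall_fin3 <;>
        simp only [Matrix.cons_val_zero, Matrix.cons_val_one, Matrix.head_cons,
          Matrix.cons_val_two, Matrix.tail_cons] <;> intro i
      · rw [thrVec_sq n _ _ hA0B0]; split_ifs <;> norm_num
      · rw [thrVec_sq n _ _ hA1B1]; split_ifs <;> norm_num
      · rw [div_pow, div_le_one (by positivity)]
        nlinarith
    · rw [Fin.sum_univ_three]
      simp only [Matrix.cons_val_zero, Matrix.cons_val_one, Matrix.head_cons,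
        Matrix.cons_val_two, Matrix.tail_cons, hsumG0, hsumG1, const_sum, ← hNdef, hsN]
      rw [hseq]; ring
    · rw [Fin.sum_univ_three]
      simp only [Matrix.cons_val_zero, Matrix.cons_val_one, Matrix.head_cons,
        Matrix.cons_val_two, Matrix.tail_cons, hsumG0, hsumG1, hsqG0, hsqG1,
        const_sum, const_sumsq, ← hNdef]
      have expand : θ*(1-h) * ((j0:ℝ)^2 - (N - e0)) + θ*h * (((j0:ℝ)+1)^2 - (N - e1))
          + (1-θ) * ((N*(s/N))^2 - N*(s/N)^2) = θ * QA + (1-θ) * QB := by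
        rw [hQBalt, hQAdef]; ring
      rw [expand]
      linear_combination -hθeq

lemma col (n : ℕ) (hn : 2 ≤ n) (s q : ℝ)
    (h1 : s^2 ≤ ((n:ℝ)-1)^2) (h2 : s^2 - n + 1 ≤ q) (h3 : q ≤ ((n:ℝ)-1)^2) :
    ∃ (w : Fin 3 → ℝ) (V : Fin 3 → Fin n → ℝ),
      (∀ k, 0 ≤ w k) ∧ (∑ k, w k) = 1 ∧ (∀ k i, (V k i)^2 ≤ 1) ∧
      ((∑ k, w k * (∑ i, V k i)) = s) ∧
      ((∑ k, w k * ((∑ i, V k i)^2 - ∑ i, (V k i)^2)) = q) := by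
  have hN2 : (2:ℝ) ≤ (n:ℝ) := by exact_mod_cast hn
  have hN1 : (0:ℝ) ≤ (n:ℝ) - 1 := by linarith
  rcases le_or_gt 0 s with hs | hs
  · have hsle : s ≤ (n:ℝ) - 1 := by nlinarith
    exact col0 n hn s q hs hsle h2 h3
  · have h0 : 0 ≤ -s := by linarith
    have hsq : (-s)^2 = s^2 := by ring
    have hsle : -s ≤ (n:ℝ) - 1 := by nlinarith
    obtain ⟨w, V, hw, hws, hV, hlin, hquad⟩ :=
      col0 n hn (-s) q h0 hsle (by rw [hsq]; exact h2) h3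
    refine ⟨w, fun k i => -(V k i), hw, hws, fun k i => by simpa using hV k i, ?_, ?_⟩
    · have hneg : ∀ k, (∑ i, -(V k i)) = -(∑ i, V k i) := by
        intro k; simp
      have : (∑ k, w k * (∑ i, -(V k i))) = -(∑ k, w k * (∑ i, V k i)) := by
        rw [← Finset.sum_neg_distrib]
        apply Finset.sum_congr rfl; intro k _; rw [hneg k]; ring
      rw [this, hlin, neg_neg]
    · have hneg : ∀ k, (∑ i, -(V k i)) = -(∑ i, V k i) := by
        intro k; simp
      have hneg2 : ∀ k, (∑ i, (-(V k i))^2) = (∑ i, (V k i)^2) := by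
        intro k; apply Finset.sum_congr rfl; intro i _; ring
      rw [← hquad]
      apply Finset.sum_congr rfl; intro k _
      rw [hneg k, hneg2 k]; ring

lemma quad_eq (n : ℕ) (y : Fin n → ℝ) :
    (∑ i, ∑ j, if i = j then 0 else y i * y j) = (∑ i, y i)^2 - ∑ i, (y i)^2 := by
  have h : ∀ i : Fin n, (∑ j, if i = j then (0:ℝ) else y i * y j)
      = y i * (∑ j, y j) - (y i)^2 := by
    intro i
    have h2 : (∑ j, if i = j then (0:ℝ) else y i * y j)
        = ∑ j, (y i * y j - if i = j then y i * y j else 0) := by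
      apply Finset.sum_congr rfl; intro j _; split_ifs with h <;> simp [h]
    rw [h2, Finset.sum_sub_distrib, ← Finset.mul_sum, Finset.sum_ite_eq]
    simp [pow_two]
  rw [Finset.sum_congr rfl (fun i _ => h i), Finset.sum_sub_distrib, ← Finset.sum_mul]
  ring

lemma map_finset_sum' {α β ι : Type*} [MeasurableSpace α] [MeasurableSpace β]
    {f : α → β} (hf : Measurable f) (s : Finset ι) (μ : ι → Measure α) :
    (∑ i ∈ s, μ i).map f = ∑ i ∈ s, (μ i).map f := by
  classical
  induction s using Finset.induction with
  | empty => simp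
  | insert a s h ih =>
      rw [Finset.sum_insert h, Measure.map_add _ _ hf, ih, Finset.sum_insert h]

set_option maxHeartbeats 2000000 in
theorem stmt_14 (n d : ℕ) (hn : 2 ≤ n) (hd : 1 ≤ d)
    (z0 : ℝ) (z zz : Fin d → ℝ)
    (hz0 : 0 < z0)
    (hineq : ∑ α, max (z0 * zz α / n) ((z α) ^ 2 / n)
      ≤ z0 ^ 2 * (((n : ℝ) - 1) / n) ^ 2
        + ∑ α, ((n : ℝ) - 1) * z0 * zz α / (n : ℝ) ^ 2) :
    ∃ μ : Measure (Fin n → Fin d → ℝ), IsFiniteMeasure μ ∧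
      -- μ is supported on K_n^d
      μ {x | ¬ ∀ i, ∑ α, (x i α) ^ 2 ≤ 1} = 0 ∧
      -- μ is invariant under permutations of the n ball factors
      (∀ σ : Equiv.Perm (Fin n),
        Measure.map (fun x : Fin n → Fin d → ℝ => fun i => x (σ i)) μ = μ) ∧
      (μ {x | ∀ i, ∑ α, (x i α) ^ 2 ≤ 1}).toReal = z0 ∧
      (∀ α, ∫ x, sLin n d α x ∂μ = z α) ∧
      (∀ α, ∫ x, sQuad n d α x ∂μ = zz α) := by
  classical
  have hN2 : (2:ℝ) ≤ (n:ℝ) := by exact_mod_cast hn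
  have hN0 : (0:ℝ) < (n:ℝ) := by linarith
  have hN1 : (0:ℝ) < (n:ℝ) - 1 := by linarith
  -- the budget R and gamma
  obtain ⟨R, hRdef⟩ : ∃ R : Fin d → ℝ,
      R = fun α => max (z0 * zz α) ((n:ℝ) * (z α)^2 - ((n:ℝ)-1) * z0 * zz α) := ⟨_, rfl⟩
  have hRa : ∀ α, z0 * zz α ≤ R α := by
    intro α; rw [hRdef]; exact le_max_left _ _
  have hRb : ∀ α, (n:ℝ) * (z α)^2 - ((n:ℝ)-1) * z0 * zz α ≤ R α := by
    intro α; rw [hRdef]; exact le_max_right _ _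
  have hRz : ∀ α, (z α)^2 ≤ R α := by
    intro α; nlinarith [hRa α, hRb α]
  have hR0 : ∀ α, 0 ≤ R α := fun α => le_trans (sq_nonneg _) (hRz α)
  have hRsum : ∑ α, R α ≤ ((n:ℝ)-1)^2 * z0^2 := by
    have key : ∀ α, R α = (n:ℝ)^2 * max (z0 * zz α / n) ((z α)^2 / n)
        - ((n:ℝ)-1) * z0 * zz α := by
      intro α
      rcases le_total (z0 * zz α) ((z α)^2) with hle | hle
      · have hdiv : z0 * zz α / (n:ℝ) ≤ (z α)^2 / (n:ℝ) :=
          (div_le_div_iff_of_pos_right hN0).2 hle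
        have hdiv2 : z0 * zz α ≤ (n:ℝ) * (z α)^2 - ((n:ℝ)-1) * z0 * zz α := by
          nlinarith
        rw [max_eq_right hdiv]
        simp only [hRdef]
        rw [max_eq_right hdiv2]
        field_simp
      · have hdiv : (z α)^2 / (n:ℝ) ≤ z0 * zz α / (n:ℝ) :=
          (div_le_div_iff_of_pos_right hN0).2 hle
        have hdiv2 : (n:ℝ) * (z α)^2 - ((n:ℝ)-1) * z0 * zz α ≤ z0 * zz α := by
          nlinarith
        rw [max_eq_left hdiv]
        simp only [hRdef]
        rw [max_eq_left hdiv2]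
        field_simp
        ring
    have e1 : ∑ α, R α = (n:ℝ)^2 * (∑ α, max (z0 * zz α / n) ((z α)^2 / n))
        - ∑ α, ((n:ℝ)-1) * z0 * zz α := by
      rw [Finset.sum_congr rfl (fun α _ => key α), Finset.sum_sub_distrib, Finset.mul_sum]
    have e2 : (n:ℝ)^2 * (∑ α, ((n:ℝ)-1)*z0*zz α/(n:ℝ)^2) = ∑ α, ((n:ℝ)-1)*z0*zz α := by
      rw [Finset.mul_sum]
      apply Finset.sum_congr rfl; intro α _; field_simp
    have e3 : (n:ℝ)^2 * (z0 ^ 2 * (((n : ℝ) - 1) / n) ^ 2) = ((n:ℝ)-1)^2 * z0^2 := by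
      field_simp
    have e4 := mul_le_mul_of_nonneg_left hineq (by positivity : (0:ℝ) ≤ (n:ℝ)^2)
    rw [mul_add, e2, e3] at e4
    linarith
  obtain ⟨γ, hγdef⟩ : ∃ γ : Fin d → ℝ, γ = fun α => R α / (((n:ℝ)-1)^2 * z0^2) := ⟨_, rfl⟩
  have hD0 : (0:ℝ) < ((n:ℝ)-1)^2 * z0^2 := by positivity
  have hγ0 : ∀ α, 0 ≤ γ α := by
    intro α; rw [hγdef]; exact div_nonneg (hR0 α) hD0.le
  have hγR : ∀ α, ((n:ℝ)-1)^2 * z0^2 * γ α = R α := by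
    intro α; rw [hγdef]; field_simp
  have hγsum : ∑ α, γ α ≤ 1 := by
    rw [hγdef, ← Finset.sum_div, div_le_one hD0]
    exact hRsum
  -- zero case facts
  have hzero : ∀ α, γ α = 0 → z α = 0 ∧ zz α = 0 := by
    intro α hγa
    have hRα : R α = 0 := by
      have := hγR α; rw [hγa] at this; linarith [this]
    have hz : z α = 0 := by nlinarith [hRz α, sq_nonneg (z α)]
    refine ⟨hz, ?_⟩
    have h1 : z0 * zz α ≤ 0 := by rw [← hRα]; exact hRa α
    have h2 : (n:ℝ) * (z α)^2 - ((n:ℝ)-1) * z0 * zz α ≤ 0 := by rw [← hRα]; exact hRb α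
    rw [hz] at h2
    have : 0 ≤ z0 * zz α := by nlinarith
    have : z0 * zz α = 0 := le_antisymm h1 this
    rcases mul_eq_zero.1 this with h | h
    · exact absurd h (ne_of_gt hz0)
    · exact h
  obtain ⟨g, hgdef⟩ : ∃ g : Fin d → ℝ, g = fun α => Real.sqrt (γ α) := ⟨_, rfl⟩
  have hg0 : ∀ α, 0 ≤ g α := by intro α; rw [hgdef]; exact Real.sqrt_nonneg _
  have hg2 : ∀ α, (g α)^2 = γ α := by
    intro α; rw [hgdef]; exact Real.sq_sqrt (hγ0 α)
  obtain ⟨sbar, hsbardef⟩ : ∃ t : Fin d → ℝ, t = fun α => z α / (z0 * g α) := ⟨_, rfl⟩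
  obtain ⟨qbar, hqbardef⟩ : ∃ t : Fin d → ℝ, t = fun α => zz α / (z0 * γ α) := ⟨_, rfl⟩
  -- hypotheses for col
  have hcolhyp : ∀ α, (sbar α)^2 ≤ ((n:ℝ)-1)^2 ∧
      (sbar α)^2 - n + 1 ≤ qbar α ∧ qbar α ≤ ((n:ℝ)-1)^2 := by
    intro α
    by_cases hγa : γ α = 0
    · obtain ⟨hz, hzz⟩ := hzero α hγa
      simp only [hsbardef, hqbardef, hz, hzz, zero_div, hγa]
      refine ⟨?_, ?_, ?_⟩ <;> nlinarith [sq_nonneg ((n:ℝ)-1), hN1, hN2]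
    · have hγpos : 0 < γ α := lt_of_le_of_ne (hγ0 α) (Ne.symm hγa)
      have hgpos : 0 < g α := by
        rw [hgdef]; exact Real.sqrt_pos.2 hγpos
      have hP : (z0 * g α)^2 = z0^2 * γ α := by rw [mul_pow, hg2]
      have hPpos : 0 < z0^2 * γ α := by positivity
      have hsb : (sbar α)^2 = (z α)^2 / (z0^2 * γ α) := by
        rw [hsbardef]; rw [div_pow, hP]
      have hRα := hγR α
      refine ⟨?_, ?_, ?_⟩
      · rw [hsb, div_le_iff₀ hPpos]
        nlinarith [hRz α]
      · rw [hsb]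
        simp only [hqbardef]
        have hq' : zz α / (z0 * γ α) = (z0 * zz α) / (z0^2 * γ α) := by
          rw [div_eq_div_iff (by positivity) (ne_of_gt hPpos)]; ring
        rw [hq']
        have hnum : (z α)^2 - ((n:ℝ)-1)*(z0^2*γ α) ≤ z0 * zz α := by
          nlinarith [hRb α, sq_nonneg (z α), hγR α]
        have hdiff : (z0*zz α)/(z0^2*γ α) - ((z α)^2/(z0^2*γ α) - n + 1)
            = (z0*zz α - (z α)^2 + ((n:ℝ)-1)*(z0^2*γ α))/(z0^2*γ α) := by
          field_simp; ring
        have hge : 0 ≤ (z0*zz α - (z α)^2 + ((n:ℝ)-1)*(z0^2*γ α))/(z0^2*γ α) :=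
          div_nonneg (by linarith) hPpos.le
        linarith [hdiff ▸ hge]
      · simp only [hqbardef]
        rw [div_le_iff₀ (by positivity : (0:ℝ) < z0 * γ α)]
        nlinarith [hRa α]
  -- choose per-column data
  have hcol : ∀ α, ∃ (w : Fin 3 → ℝ) (V : Fin 3 → Fin n → ℝ),
      (∀ k, 0 ≤ w k) ∧ (∑ k, w k) = 1 ∧ (∀ k i, (V k i)^2 ≤ 1) ∧
      ((∑ k, w k * (∑ i, V k i)) = sbar α) ∧
      ((∑ k, w k * ((∑ i, V k i)^2 - ∑ i, (V k i)^2)) = qbar α) :=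
    fun α => col n hn (sbar α) (qbar α) (hcolhyp α).1 (hcolhyp α).2.1 (hcolhyp α).2.2
  choose w V hw0 hw1 hVb hVlin hVquad using hcol
  -- final targets
  have hLtarget : ∀ α, z0 * (g α * sbar α) = z α := by
    intro α
    by_cases hγa : γ α = 0
    · have hza := (hzero α hγa).1
      have hga : g α = 0 := by rw [hgdef]; simp [hγa]
      rw [hza, hga]; ring
    · have hγpos : 0 < γ α := lt_of_le_of_ne (hγ0 α) (Ne.symm hγa)
      have hgpos : 0 < g α := by rw [hgdef]; exact Real.sqrt_pos.2 hγpos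
      simp only [hsbardef]
      field_simp [ne_of_gt hgpos, ne_of_gt hz0]
      try ring
  have hQtarget : ∀ α, z0 * (γ α * qbar α) = zz α := by
    intro α
    by_cases hγa : γ α = 0
    · have hzza := (hzero α hγa).2
      rw [hzza, hγa]; ring
    · have hγpos : 0 < γ α := lt_of_le_of_ne (hγ0 α) (Ne.symm hγa)
      simp only [hqbardef]
      field_simp
  -- the measure data
  obtain ⟨X, hXdef⟩ : ∃ X : Equiv.Perm (Fin n) → (Fin d → Fin 3) → (Fin n → Fin d → ℝ),
      X = fun σ f => fun i α => g α * V α (f α) (σ i) := ⟨_, rfl⟩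
  obtain ⟨c, hcdef⟩ : ∃ c : (Fin d → Fin 3) → ℝ,
      c = fun f => z0 * (∏ β, w β (f β)) / (n.factorial : ℝ) := ⟨_, rfl⟩
  have hfact0 : (0:ℝ) < (n.factorial : ℝ) := by exact_mod_cast n.factorial_pos
  have hc0 : ∀ f, 0 ≤ c f := by
    intro f; simp only [hcdef]
    have h1 : 0 ≤ ∏ β, w β (f β) := Finset.prod_nonneg (fun β _ => hw0 β (f β))
    positivity
  have hprodsum : ∑ f : Fin d → Fin 3, (∏ β, w β (f β)) = 1 := by
    have h := Finset.prod_univ_sum (fun _ : Fin d => (Finset.univ : Finset (Fin 3)))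
      (fun β k => w β k)
    rw [Fintype.piFinset_univ] at h
    rw [← h]
    exact Finset.prod_eq_one (fun β _ => hw1 β)
  have hcsum : ∑ f : Fin d → Fin 3, c f = z0 / (n.factorial : ℝ) := by
    simp only [hcdef, div_eq_mul_inv, mul_assoc]
    rw [← Finset.mul_sum]
    congr 1
    rw [← Finset.sum_mul, hprodsum, one_mul]
  have hfact : ∀ (α : Fin d) (t : Fin 3 → ℝ),
      ∑ f : Fin d → Fin 3, (∏ β, w β (f β)) * t (f α) = ∑ k, w α k * t k := by
    intro α t
    have h := Finset.prod_univ_sum (fun _ : Fin d => (Finset.univ : Finset (Fin 3)))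
      (fun β k => w β k * (if β = α then t k else 1))
    rw [Fintype.piFinset_univ] at h
    have hL : (∏ β, ∑ k, w β k * (if β = α then t k else 1)) = ∑ k, w α k * t k := by
      rw [Finset.prod_eq_single α (fun β _ hβ => by
          simp only [if_neg hβ, mul_one]; exact hw1 β)
        (fun hα => absurd (Finset.mem_univ α) hα)]
      simp
    have hR : ∀ f : Fin d → Fin 3,
        (∏ β, w β (f β) * (if β = α then t (f β) else 1))
          = (∏ β, w β (f β)) * t (f α) := by
      intro f
      rw [Finset.prod_mul_distrib, Finset.prod_ite_eq' Finset.univ α (fun β => t (f β))]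
      simp
    rw [← hL, h]
    exact Finset.sum_congr rfl (fun f _ => (hR f).symm)
  -- measurability
  have hM : ∀ (i : Fin n) (α : Fin d), Measurable (fun x : Fin n → Fin d → ℝ => x i α) :=
    fun i α => (measurable_pi_apply α).comp (measurable_pi_apply i)
  have hLmeas : ∀ α, Measurable (sLin n d α) := by
    intro α; unfold sLin; exact Finset.measurable_sum _ (fun i _ => hM i α)
  have hQmeas : ∀ α, Measurable (sQuad n d α) := by
    intro α; unfold sQuad
    apply Finset.measurable_sum; intro i _
    apply Finset.measurable_sum; intro j _
    by_cases hij : i = j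
    · simp only [if_pos hij]; exact measurable_const
    · simp only [if_neg hij]; exact (hM i α).mul (hM j α)
  have hSmeas : MeasurableSet {x : Fin n → Fin d → ℝ | ∀ i, ∑ α, (x i α)^2 ≤ 1} := by
    have hset : {x : Fin n → Fin d → ℝ | ∀ i, ∑ α, (x i α)^2 ≤ 1}
        = ⋂ i, {x | ∑ α, (x i α)^2 ≤ 1} := by
      ext x; simp [Set.mem_iInter]
    rw [hset]
    apply MeasurableSet.iInter
    intro i
    exact measurableSet_le
      (Finset.measurable_sum _ (fun α _ => (hM i α).pow_const 2)) measurable_const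
  have hXball : ∀ σ f i, ∑ α, (X σ f i α)^2 ≤ 1 := by
    intro σ f i
    simp only [hXdef]
    calc ∑ α, (g α * V α (f α) (σ i))^2 ≤ ∑ α, γ α := by
          apply Finset.sum_le_sum; intro α _
          rw [mul_pow, hg2]
          calc γ α * (V α (f α) (σ i))^2 ≤ γ α * 1 :=
                mul_le_mul_of_nonneg_left (hVb α (f α) (σ i)) (hγ0 α)
            _ = γ α := mul_one _
      _ ≤ 1 := hγsum
  have hXmem : ∀ σ f, X σ f ∈ {x : Fin n → Fin d → ℝ | ∀ i, ∑ α, (x i α)^2 ≤ 1} :=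
    fun σ f i => hXball σ f i
  -- integrability
  have hdiracInt : ∀ (F : (Fin n → Fin d → ℝ) → ℝ), Measurable F →
      ∀ x, Integrable F (Measure.dirac x) := by
    intro F hF x
    refine ⟨hF.aestronglyMeasurable, ?_⟩
    simp [HasFiniteIntegral, lintegral_dirac]
  have hsmulInt : ∀ (F : (Fin n → Fin d → ℝ) → ℝ), Measurable F → ∀ σ f,
      Integrable F ((ENNReal.ofReal (c f)) • Measure.dirac (X σ f)) := by
    intro F hF σ f
    exact (hdiracInt F hF (X σ f)).smul_measure ENNReal.ofReal_ne_top
  -- the generic integral computation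
  have hint : ∀ (F : (Fin n → Fin d → ℝ) → ℝ), Measurable F →
      (∫ x, F x ∂(∑ σ : Equiv.Perm (Fin n), ∑ f : Fin d → Fin 3,
        (ENNReal.ofReal (c f)) • Measure.dirac (X σ f)))
      = ∑ σ : Equiv.Perm (Fin n), ∑ f : Fin d → Fin 3, c f * F (X σ f) := by
    intro F hF
    rw [integral_finset_sum_measure (fun σ _ =>
      integrable_finset_sum_measure.2 (fun f _ => hsmulInt F hF σ f))]
    apply Finset.sum_congr rfl; intro σ _
    rw [integral_finset_sum_measure (fun f _ => hsmulInt F hF σ f)]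
    apply Finset.sum_congr rfl; intro f _
    rw [integral_smul_measure, integral_dirac, smul_eq_mul, ENNReal.toReal_ofReal (hc0 f)]
  refine ⟨∑ σ : Equiv.Perm (Fin n), ∑ f : Fin d → Fin 3,
      (ENNReal.ofReal (c f)) • Measure.dirac (X σ f), ?_, ?_, ?_, ?_, ?_, ?_⟩
  · -- finite
    constructor
    rw [Measure.finset_sum_apply]
    refine ENNReal.sum_lt_top.2 (fun σ _ => ?_)
    rw [Measure.finset_sum_apply]
    refine ENNReal.sum_lt_top.2 (fun f _ => ?_)
    simp only [Measure.smul_apply, smul_eq_mul, measure_univ, mul_one]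
    exact ENNReal.ofReal_lt_top
  · -- null outside ball
    rw [Measure.finset_sum_apply]
    refine Finset.sum_eq_zero (fun σ _ => ?_)
    rw [Measure.finset_sum_apply]
    refine Finset.sum_eq_zero (fun f _ => ?_)
    rw [Measure.smul_apply]
    have hcm : {x : Fin n → Fin d → ℝ | ¬ ∀ i, ∑ α, (x i α)^2 ≤ 1}
        = {x : Fin n → Fin d → ℝ | ∀ i, ∑ α, (x i α)^2 ≤ 1}ᶜ := rfl
    rw [hcm, Measure.dirac_apply' _ hSmeas.compl,
      Set.indicator_of_notMem (Set.notMem_compl_iff.2 (hXmem σ f)), smul_zero]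
  · -- invariance
    intro τ
    have hτmeas : Measurable (fun x : Fin n → Fin d → ℝ => fun i => x (τ i)) :=
      measurable_pi_lambda _ (fun i => measurable_pi_apply (τ i))
    rw [map_finset_sum' hτmeas]
    have hterm : ∀ σ : Equiv.Perm (Fin n),
        Measure.map (fun x : Fin n → Fin d → ℝ => fun i => x (τ i))
          (∑ f : Fin d → Fin 3, (ENNReal.ofReal (c f)) • Measure.dirac (X σ f))
        = ∑ f : Fin d → Fin 3, (ENNReal.ofReal (c f)) • Measure.dirac (X (σ * τ) f) := by
      intro σ
      rw [map_finset_sum' hτmeas]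
      apply Finset.sum_congr rfl; intro f _
      rw [Measure.map_smul, Measure.map_dirac' hτmeas]
      simp [hXdef, Equiv.Perm.mul_apply]
    rw [Finset.sum_congr rfl (fun σ _ => hterm σ)]
    exact Equiv.sum_comp (Equiv.mulRight τ)
      (fun σ => ∑ f : Fin d → Fin 3, (ENNReal.ofReal (c f)) • Measure.dirac (X σ f))
  · -- total mass
    have happ : (∑ σ : Equiv.Perm (Fin n), ∑ f : Fin d → Fin 3,
        (ENNReal.ofReal (c f)) • Measure.dirac (X σ f))
          {x : Fin n → Fin d → ℝ | ∀ i, ∑ α, (x i α)^2 ≤ 1}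
        = ∑ σ : Equiv.Perm (Fin n), ∑ f : Fin d → Fin 3, ENNReal.ofReal (c f) := by
      rw [Measure.finset_sum_apply]
      apply Finset.sum_congr rfl; intro σ _
      rw [Measure.finset_sum_apply]
      apply Finset.sum_congr rfl; intro f _
      rw [Measure.smul_apply, Measure.dirac_apply' _ hSmeas,
        Set.indicator_of_mem (hXmem σ f), smul_eq_mul]
      simp
    rw [happ]
    rw [ENNReal.toReal_sum (fun σ _ => ENNReal.sum_ne_top.2 (fun f _ => ENNReal.ofReal_ne_top))]
    rw [Finset.sum_congr rfl (fun σ _ =>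
      ENNReal.toReal_sum (fun f _ => ENNReal.ofReal_ne_top))]
    rw [Finset.sum_congr rfl (fun σ _ => Finset.sum_congr rfl
      (fun f _ => ENNReal.toReal_ofReal (hc0 f)))]
    rw [Finset.sum_congr rfl (fun σ _ => hcsum), Finset.sum_const, Finset.card_univ,
      Fintype.card_perm, Fintype.card_fin, nsmul_eq_mul]
    field_simp
  · -- linear moments
    intro α
    rw [hint (sLin n d α) (hLmeas α)]
    have hsLinX : ∀ σ f, sLin n d α (X σ f) = g α * (∑ i, V α (f α) i) := by
      intro σ f; unfold sLin; simp only [hXdef]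
      rw [← Finset.mul_sum]
      congr 1
      exact Equiv.sum_comp σ (V α (f α))
    have hinner : ∀ σ : Equiv.Perm (Fin n),
        ∑ f : Fin d → Fin 3, c f * sLin n d α (X σ f)
          = z0 * g α / (n.factorial : ℝ) * sbar α := by
      intro σ
      calc ∑ f : Fin d → Fin 3, c f * sLin n d α (X σ f)
          = ∑ f : Fin d → Fin 3, (z0 * g α / (n.factorial : ℝ))
              * ((∏ β, w β (f β)) * (∑ i, V α (f α) i)) := by
            apply Finset.sum_congr rfl; intro f _
            rw [hsLinX σ f]; simp only [hcdef]; ring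
        _ = (z0 * g α / (n.factorial : ℝ))
              * (∑ f : Fin d → Fin 3, (∏ β, w β (f β)) * (∑ i, V α (f α) i)) := by
            rw [Finset.mul_sum]
        _ = (z0 * g α / (n.factorial : ℝ)) * (∑ k, w α k * (∑ i, V α k i)) := by
            rw [hfact α (fun k => ∑ i, V α k i)]
        _ = z0 * g α / (n.factorial : ℝ) * sbar α := by rw [hVlin α]
    rw [Finset.sum_congr rfl (fun σ _ => hinner σ), Finset.sum_const, Finset.card_univ,
      Fintype.card_perm, Fintype.card_fin, nsmul_eq_mul]
    have hcancel : (n.factorial : ℝ) * (z0 * g α / (n.factorial : ℝ) * sbar α)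
        = z0 * (g α * sbar α) := by
      field_simp
    rw [hcancel, hLtarget α]
  · -- quadratic moments
    intro α
    rw [hint (sQuad n d α) (hQmeas α)]
    have hsQuadX : ∀ σ f, sQuad n d α (X σ f)
        = γ α * ((∑ i, V α (f α) i)^2 - ∑ i, (V α (f α) i)^2) := by
      intro σ f; unfold sQuad; simp only [hXdef]
      rw [quad_eq n (fun i => g α * V α (f α) (σ i))]
      have hA : (∑ i, g α * V α (f α) (σ i)) = g α * ∑ i, V α (f α) i := by
        rw [← Finset.mul_sum]; congr 1; exact Equiv.sum_comp σ (V α (f α))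
      have hB : (∑ i, (g α * V α (f α) (σ i))^2) = γ α * ∑ i, (V α (f α) i)^2 := by
        have hpt : ∀ i : Fin n, (g α * V α (f α) (σ i))^2
            = γ α * (V α (f α) (σ i))^2 := fun i => by rw [mul_pow, hg2]
        rw [Finset.sum_congr rfl (fun i _ => hpt i), ← Finset.mul_sum]
        congr 1
        exact Equiv.sum_comp σ (fun i => (V α (f α) i)^2)
      rw [hA, hB, mul_pow, hg2]; ring
    have hinner : ∀ σ : Equiv.Perm (Fin n),
        ∑ f : Fin d → Fin 3, c f * sQuad n d α (X σ f)
          = z0 * γ α / (n.factorial : ℝ) * qbar α := by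
      intro σ
      calc ∑ f : Fin d → Fin 3, c f * sQuad n d α (X σ f)
          = ∑ f : Fin d → Fin 3, (z0 * γ α / (n.factorial : ℝ))
              * ((∏ β, w β (f β)) * ((∑ i, V α (f α) i)^2 - ∑ i, (V α (f α) i)^2)) := by
            apply Finset.sum_congr rfl; intro f _
            rw [hsQuadX σ f]; simp only [hcdef]; ring
        _ = (z0 * γ α / (n.factorial : ℝ))
              * (∑ f : Fin d → Fin 3, (∏ β, w β (f β))
                  * ((∑ i, V α (f α) i)^2 - ∑ i, (V α (f α) i)^2)) := by
            rw [Finset.mul_sum]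
        _ = (z0 * γ α / (n.factorial : ℝ))
              * (∑ k, w α k * ((∑ i, V α k i)^2 - ∑ i, (V α k i)^2)) := by
            rw [hfact α (fun k => (∑ i, V α k i)^2 - ∑ i, (V α k i)^2)]
        _ = z0 * γ α / (n.factorial : ℝ) * qbar α := by rw [hVquad α]
    rw [Finset.sum_congr rfl (fun σ _ => hinner σ), Finset.sum_const, Finset.card_univ,
      Fintype.card_perm, Fintype.card_fin, nsmul_eq_mul]
    have hcancel : (n.factorial : ℝ) * (z0 * γ α / (n.factorial : ℝ) * qbar α)
        = z0 * (γ α * qbar α) := by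
      field_simp
    rw [hcancel, hQtarget α]
end

section
/- Let n ≥ 2 and d ≥ 1 be integers and let μ be a nonzero finite Borel measure on K_n^d that is invariant under permutations of the n ball factors. Set z_0 = μ(K_n^d), z_α = ∫ s_α dμ and z_{αα} = ∫ s_{αα} dμ for 1 ≤ α ≤ d. Then z_0 > 0 and Σ_{α=1}^d max{z_0 z_{αα}/(n−1), z_α²/n} ≤ z_0² + Σ_{α=1}^d z_0 z_{αα}/n. -/
open scoped BigOperators
open MeasureTheory

/-- Algebraic identity: the off-diagonal sum equals the square of the sum minus the
sum of squares. -/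
lemma sQuad_eq (n d : ℕ) (α : Fin d) (x : Fin n → Fin d → ℝ) :
    sQuad n d α x = (sLin n d α x) ^ 2 - ∑ i, (x i α) ^ 2 := by
  classical
  unfold sQuad sLin
  rw [sq, Finset.sum_mul_sum, ← Finset.sum_sub_distrib]
  refine Finset.sum_congr rfl fun i _ => ?_
  have h1 : ∑ j, (if i = j then 0 else x i α * x j α)
      = ∑ j, (x i α * x j α - if i = j then x i α * x j α else 0) := by
    refine Finset.sum_congr rfl fun j _ => ?_
    split <;> ring
  rw [h1, Finset.sum_sub_distrib, Finset.sum_ite_eq]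
  simp [sq]

lemma sQuad_le (n d : ℕ) (α : Fin d) (x : Fin n → Fin d → ℝ) :
    sQuad n d α x ≤ ((n : ℝ) - 1) * ∑ i, (x i α) ^ 2 := by
  classical
  have h := sq_sum_le_card_mul_sum_sq (s := (Finset.univ : Finset (Fin n)))
    (f := fun i => x i α)
  rw [sQuad_eq]
  simp only [Finset.card_univ, Fintype.card_fin] at h
  have hnn : (0:ℝ) ≤ ∑ i, (x i α) ^ 2 :=
    Finset.sum_nonneg fun i _ => sq_nonneg _
  unfold sLin
  nlinarith [h]

theorem stmt_15 (n d : ℕ) (hn : 2 ≤ n) (hd : 1 ≤ d)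
    (μ : Measure (Fin n → Fin d → ℝ)) [IsFiniteMeasure μ]
    (hμ : μ ≠ 0)
    -- μ is supported on K_n^d
    (hsupp : μ {x | ¬ ∀ i, ∑ α, (x i α) ^ 2 ≤ 1} = 0)
    -- μ is invariant under permutations of the n ball factors
    (hsym : ∀ σ : Equiv.Perm (Fin n),
      Measure.map (fun x : Fin n → Fin d → ℝ => fun i => x (σ i)) μ = μ)
    (z0 : ℝ) (z zz : Fin d → ℝ)
    (hz0 : z0 = (μ {x | ∀ i, ∑ α, (x i α) ^ 2 ≤ 1}).toReal)
    (hz : ∀ α, z α = ∫ x, sLin n d α x ∂μ)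
    (hzz : ∀ α, zz α = ∫ x, sQuad n d α x ∂μ) :
    0 < z0 ∧
    ∑ α, max (z0 * zz α / ((n : ℝ) - 1)) ((z α) ^ 2 / n)
      ≤ z0 ^ 2 + ∑ α, z0 * zz α / n := by
  classical
  have xmeas : ∀ (i : Fin n) (α : Fin d), Measurable fun x : Fin n → Fin d → ℝ => x i α :=
    fun i α => (measurable_pi_apply α).comp (measurable_pi_apply i)
  -- z0 is the total mass
  have hSuniv : μ {x | ∀ i, ∑ α, (x i α) ^ 2 ≤ 1} = μ Set.univ :=
    measure_congr (MeasureTheory.ae_eq_univ.mpr (by rwa [Set.compl_setOf]))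
  have hz0' : z0 = (μ Set.univ).toReal := by rw [hz0, hSuniv]
  have hz0pos : 0 < z0 := by
    rw [hz0']
    exact ENNReal.toReal_pos (by simpa [Measure.measure_univ_eq_zero] using hμ)
      (measure_ne_top μ _)
  -- a.e. bounds
  have hae : ∀ᵐ x ∂μ, ∀ i, ∑ α, (x i α) ^ 2 ≤ 1 := by
    rw [MeasureTheory.ae_iff]; exact hsupp
  have habs : ∀ᵐ x ∂μ, ∀ (i : Fin n) (α : Fin d), (x i α) ^ 2 ≤ 1 := by
    filter_upwards [hae] with x hx i α
    exact le_trans (Finset.single_le_sum (fun β _ => sq_nonneg (x i β)) (Finset.mem_univ α))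
      (hx i)
  -- integrability helper
  have integ : ∀ (f : (Fin n → Fin d → ℝ) → ℝ) (C : ℝ), Measurable f →
      (∀ᵐ x ∂μ, |f x| ≤ C) → Integrable f μ := fun f C hf hb =>
    (integrable_const C).mono' hf.aestronglyMeasurable
      (by simpa [Real.norm_eq_abs] using hb)
  have measL : ∀ α, Measurable (sLin n d α) := fun α =>
    Finset.measurable_sum _ fun i _ => xmeas i α
  have measT : ∀ α, Measurable fun x : Fin n → Fin d → ℝ => ∑ i, (x i α) ^ 2 := fun α =>
    Finset.measurable_sum _ fun i _ => (xmeas i α).pow_const 2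
  have hintT : ∀ α, Integrable (fun x => ∑ i, (x i α) ^ 2) μ := by
    intro α
    refine integ _ n (measT α) ?_
    filter_upwards [habs] with x hx
    rw [abs_of_nonneg (Finset.sum_nonneg fun i _ => sq_nonneg _)]
    calc ∑ i, (x i α) ^ 2 ≤ ∑ _i : Fin n, (1:ℝ) :=
          Finset.sum_le_sum fun i _ => hx i α
      _ = n := by simp
  have hintL : ∀ α, Integrable (sLin n d α) μ := by
    intro α
    refine integ _ n (measL α) ?_
    filter_upwards [habs] with x hx
    calc |∑ i, x i α| ≤ ∑ i, |x i α| := Finset.abs_sum_le_sum_abs _ _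
      _ ≤ ∑ _i : Fin n, (1:ℝ) := Finset.sum_le_sum fun i _ => by
          nlinarith [hx i α, abs_nonneg (x i α), sq_abs (x i α)]
      _ = n := by simp
  have hintL2 : ∀ α, Integrable (fun x => (sLin n d α x) ^ 2) μ := by
    intro α
    refine integ _ ((n:ℝ)^2) ((measL α).pow_const 2) ?_
    filter_upwards [habs] with x hx
    have hb : |sLin n d α x| ≤ n := by
      calc |∑ i, x i α| ≤ ∑ i, |x i α| := Finset.abs_sum_le_sum_abs _ _
        _ ≤ ∑ _i : Fin n, (1:ℝ) := Finset.sum_le_sum fun i _ => by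
            nlinarith [hx i α, abs_nonneg (x i α), sq_abs (x i α)]
        _ = n := by simp
    rw [abs_of_nonneg (sq_nonneg _)]
    nlinarith [abs_nonneg (sLin n d α x), sq_abs (sLin n d α x)]
  have hintQ : ∀ α, Integrable (sQuad n d α) μ := by
    intro α
    have : sQuad n d α = fun x => (sLin n d α x) ^ 2 - ∑ i, (x i α) ^ 2 := by
      funext x; exact sQuad_eq n d α x
    rw [this]
    exact (hintL2 α).sub (hintT α)
  -- notation
  set m : ℝ := (n : ℝ) with hm
  have hm2 : (2:ℝ) ≤ m := by rw [hm]; exact_mod_cast hn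
  have hmpos : (0:ℝ) < m := by linarith
  have hm1pos : (0:ℝ) < m - 1 := by linarith
  set T : Fin d → ℝ := fun α => ∫ x, ∑ i, (x i α) ^ 2 ∂μ with hT
  have hTnonneg : ∀ α, 0 ≤ T α := fun α =>
    integral_nonneg fun x => Finset.sum_nonneg fun i _ => sq_nonneg _
  -- ∫ sLin² = zz + T
  have hI2 : ∀ α, ∫ x, (sLin n d α x) ^ 2 ∂μ = zz α + T α := by
    intro α
    have : (fun x => (sLin n d α x) ^ 2)
        = fun x => sQuad n d α x + ∑ i, (x i α) ^ 2 := by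
      funext x; have := sQuad_eq n d α x; linarith
    rw [this, integral_add (hintQ α) (hintT α), hzz α]
  -- Cauchy–Schwarz : z α ^ 2 ≤ z0 * (zz α + T α)
  have hCS : ∀ α, z α ^ 2 ≤ z0 * (zz α + T α) := by
    intro α
    set t : ℝ := z α / z0 with ht
    have hnn : 0 ≤ ∫ x, (sLin n d α x - t) ^ 2 ∂μ :=
      integral_nonneg fun x => sq_nonneg _
    have hexp : ∫ x, (sLin n d α x - t) ^ 2 ∂μ
        = ∫ x, (sLin n d α x) ^ 2 ∂μ - 2 * t * ∫ x, sLin n d α x ∂μ + t ^ 2 * z0 := by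
      have : (fun x => (sLin n d α x - t) ^ 2)
          = fun x => ((sLin n d α x) ^ 2 - (2 * t) * sLin n d α x) + t ^ 2 := by
        funext x; ring
      have hsub : Integrable (fun x => sLin n d α x ^ 2 - 2 * t * sLin n d α x) μ :=
        (hintL2 α).sub ((hintL α).const_mul _)
      have hmul : Integrable (fun x => 2 * t * sLin n d α x) μ := (hintL α).const_mul _
      rw [this, integral_add hsub (integrable_const _), integral_sub (hintL2 α) hmul,
        integral_const_mul, integral_const, measureReal_def, hz0', smul_eq_mul]
      ring
    rw [hexp, hI2 α, ← hz α] at hnn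
    have ht' : t * z0 = z α := by rw [ht, div_mul_cancel₀ _ hz0pos.ne']
    nlinarith [hnn, hz0pos]
  -- zz α ≤ (m-1) * T α
  have hzzT : ∀ α, zz α ≤ (m - 1) * T α := by
    intro α
    rw [hzz α]
    have : (m - 1) * T α = ∫ x, ((m:ℝ) - 1) * ∑ i, (x i α) ^ 2 ∂μ := by
      rw [integral_const_mul]
    rw [this]
    exact integral_mono (hintQ α) ((hintT α).const_mul _) (fun x => sQuad_le n d α x)
  -- ∑ T ≤ m * z0
  have hTsum : ∑ α, T α ≤ m * z0 := by
    have h1 : ∑ α, T α = ∫ x, ∑ α, ∑ i, (x i α) ^ 2 ∂μ :=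
      (integral_finset_sum _ fun α _ => hintT α).symm
    have h2 : ∫ x, ∑ α, ∑ i, (x i α) ^ 2 ∂μ ≤ ∫ _x, m ∂μ := by
      refine integral_mono_ae (integrable_finset_sum _ fun α _ => hintT α)
        (integrable_const _) ?_
      filter_upwards [hae] with x hx
      rw [Finset.sum_comm]
      calc ∑ i, ∑ α, (x i α) ^ 2 ≤ ∑ _i : Fin n, (1:ℝ) :=
            Finset.sum_le_sum fun i _ => hx i
        _ = m := by simp [hm]
    have h3 : ∫ _x, m ∂μ = z0 * m := by rw [integral_const, measureReal_def, hz0', smul_eq_mul]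
    linarith [h1 ▸ h2.trans_eq h3]
  refine ⟨hz0pos, ?_⟩
  -- pointwise bound on the max
  have hmax : ∀ α, max (z0 * zz α / (m - 1)) ((z α) ^ 2 / m)
      ≤ z0 * T α / m + z0 * zz α / m := by
    intro α
    refine max_le ?_ ?_
    · rw [div_le_iff₀ hm1pos]
      have h := mul_le_mul_of_nonneg_left (hzzT α) hz0pos.le
      rw [← add_div, div_mul_eq_mul_div, le_div_iff₀ hmpos]
      nlinarith [h, hTnonneg α, hz0pos.le]
    · rw [div_le_iff₀ hmpos, ← add_div, div_mul_eq_mul_div, le_div_iff₀ hmpos]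
      have h := hCS α
      nlinarith [h, hmpos]
  calc ∑ α, max (z0 * zz α / (m - 1)) ((z α) ^ 2 / m)
      ≤ ∑ α, (z0 * T α / m + z0 * zz α / m) := Finset.sum_le_sum fun α _ => hmax α
    _ = (z0 / m) * ∑ α, T α + ∑ α, z0 * zz α / m := by
        rw [Finset.sum_add_distrib, Finset.mul_sum]
        congr 1
        exact Finset.sum_congr rfl fun α _ => by ring
    _ ≤ z0 ^ 2 + ∑ α, z0 * zz α / m := by
        have : (z0 / m) * ∑ α, T α ≤ z0 ^ 2 := by
          have h := mul_le_mul_of_nonneg_left hTsum (le_of_lt (div_pos hz0pos hmpos))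
          calc (z0 / m) * ∑ α, T α ≤ (z0 / m) * (m * z0) := h
            _ = z0 ^ 2 := by field_simp
        linarith
end
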